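/- Combining the two spectral sequences of the double complex: if the Felder cohomology H_F (computed on the full complex, i.e., the d-cohomology when d is the Felder operator) is concentrated at Felder degree 0, and also when roles are interchanged the Felder complex exists only at degrees 0 and ε ∈ {+1, −1}, then the relative BRST cohomology of the irreducible module satisfies H_rel^n(H_F^0) ≅ H_F^0(H_rel^n) ⊕ H_F^ε(H_rel^{n−ε}). -/

import Mathlib

open CategoryTheory CategoryTheory.Limits

namespace FelderAux
universe v

lemma middle_iso {W₁ W₂ W₃ W₄ W₅ : ModuleCat.{v} ℂ}
    {f : W₁ ⟶ W₂} {g : W₂ ⟶ W₃} {h : W₃ ⟶ W₄} {k : W₄ ⟶ W₅}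
    {w₁ : f ≫ g = 0} {w₂ : g ≫ h = 0} {w₃ : h ≫ k = 0}
    (e₁ : (ShortComplex.mk f g w₁).Exact)
    (e₂ : (ShortComplex.mk g h w₂).Exact)
    (e₃ : (ShortComplex.mk h k w₃).Exact) :
    Nonempty (W₃ ≅ cokernel f ⊞ kernel k) := by
  rw [ShortComplex.moduleCat_exact_iff_range_eq_ker] at e₁ e₂ e₃
  obtain ⟨q, hq⟩ := Submodule.exists_isCompl (LinearMap.ker h.hom)
  let A : (W₂ ⧸ LinearMap.range f.hom) ≃ₗ[ℂ] LinearMap.ker h.hom :=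
    (Submodule.quotEquivOfEq _ _ e₁).trans
      ((LinearMap.quotKerEquivRange g.hom).trans (LinearEquiv.ofEq _ _ e₂))
  let B : (q : Submodule ℂ W₃) ≃ₗ[ℂ] LinearMap.ker k.hom :=
    ((Submodule.quotientEquivOfIsCompl _ q hq).symm.trans
      (LinearMap.quotKerEquivRange h.hom)).trans (LinearEquiv.ofEq _ _ e₃)
  let E : W₃ ≃ₗ[ℂ] ((W₂ ⧸ LinearMap.range f.hom) × LinearMap.ker k.hom) :=
    (Submodule.prodEquivOfIsCompl _ q hq).symm.trans (A.symm.prodCongr B)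
  exact ⟨E.toModuleIso ≪≫
    ((ModuleCat.cokernelIsoRangeQuotient f).toLinearEquiv.prodCongr
      (ModuleCat.kernelIsoKer k).toLinearEquiv).toModuleIso.symm ≪≫
    (ModuleCat.biprodIsoProd (cokernel f) (kernel k)).symm⟩

variable {C : Type*} [Category C] [Abelian C] {ι : Type*} {c : ComplexShape ι}

noncomputable def homologyIsoKernel (K : HomologicalComplex C c) (i j k : ι)
    (hi : c.prev j = i) (hk : c.next j = k) (hz : IsZero (K.X i)) :
    K.homology j ≅ kernel (K.d j k) :=
  (K.isoHomologyπ i j hi (hz.eq_zero_of_src _)).symm ≪≫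
    IsLimit.conePointUniqueUpToIso (K.cyclesIsKernel j k hk) (limit.isLimit _)

noncomputable def homologyIsoCokernel (K : HomologicalComplex C c) (i j k : ι)
    (hi : c.prev j = i) (hk : c.next j = k) (hz : IsZero (K.X k)) :
    K.homology j ≅ cokernel (K.d i j) :=
  K.isoHomologyι j k hk (hz.eq_zero_of_tgt _) ≪≫
    IsColimit.coconePointUniqueUpToIso (K.opcyclesIsCokernel i j hi) (colimit.isColimit _)

lemma subcomplex_homology_iso {M B Cc : HomologicalComplex (ModuleCat.{v} ℂ) (ComplexShape.up ℤ)}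
    (ι' : M ⟶ B) (φ : B ⟶ Cc) (w : ι' ≫ φ = 0)
    (hse : ∀ q : ℤ, (ShortComplex.mk (ι'.f q) (φ.f q)
      (by rw [← HomologicalComplex.comp_f, w]; rfl)).ShortExact) (n : ℤ) :
    Nonempty (M.homology n ≅
      cokernel (HomologicalComplex.homologyMap φ (n - 1)) ⊞
      kernel (HomologicalComplex.homologyMap φ n)) := by
  let S : ShortComplex (HomologicalComplex (ModuleCat.{v} ℂ) (ComplexShape.up ℤ)) :=
    ShortComplex.mk ι' φ w
  have hS : S.ShortExact := by
    rw [HomologicalComplex.shortExact_iff_degreewise_shortExact]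
    exact hse
  have hrel : (ComplexShape.up ℤ).Rel (n - 1) n := by simp
  exact middle_iso (hS.homology_exact₃ (n - 1) n hrel) (hS.homology_exact₁ (n - 1) n hrel)
    (hS.homology_exact₂ n)

lemma quotient_homology_iso {B Cc M : HomologicalComplex (ModuleCat.{v} ℂ) (ComplexShape.up ℤ)}
    (φ : B ⟶ Cc) (π : Cc ⟶ M) (w : φ ≫ π = 0)
    (hse : ∀ q : ℤ, (ShortComplex.mk (φ.f q) (π.f q)
      (by rw [← HomologicalComplex.comp_f, w]; rfl)).ShortExact) (n : ℤ) :
    Nonempty (M.homology n ≅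
      cokernel (HomologicalComplex.homologyMap φ n) ⊞
      kernel (HomologicalComplex.homologyMap φ (n + 1))) := by
  let S : ShortComplex (HomologicalComplex (ModuleCat.{v} ℂ) (ComplexShape.up ℤ)) :=
    ShortComplex.mk φ π w
  have hS : S.ShortExact := by
    rw [HomologicalComplex.shortExact_iff_degreewise_shortExact]
    exact hse
  have hrel : (ComplexShape.up ℤ).Rel n (n + 1) := by simp
  exact middle_iso (hS.homology_exact₂ n) (hS.homology_exact₃ n (n + 1) hrel)
    (hS.homology_exact₁ n (n + 1) hrel)

end FelderAux

open FelderAux HomologicalComplex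

theorem felder_resolution_relative_cohomology
    (K : HomologicalComplex₂ (ModuleCat ℂ) (ComplexShape.up ℤ) (ComplexShape.up ℤ))
    [K.HasTotal (ComplexShape.up ℤ)]
    (ε : ℤ) (hε : ε = 1 ∨ ε = -1)
    (hsupp : ∀ p : ℤ, p ≠ 0 → p ≠ ε → IsZero (K.X p))
    (hfelder : ∀ q p : ℤ, p ≠ 0 → IsZero ((K.flip.X q).homology p))
    (n : ℤ) :
    Nonempty (
      ((((HomologicalComplex.homologyFunctor (ModuleCat ℂ) (ComplexShape.up ℤ)
          0).mapHomologicalComplex (ComplexShape.up ℤ)).obj K.flip).homology n) ≅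
      ((((HomologicalComplex.homologyFunctor (ModuleCat ℂ) (ComplexShape.up ℤ)
          n).mapHomologicalComplex (ComplexShape.up ℤ)).obj K).homology 0) ⊞
      ((((HomologicalComplex.homologyFunctor (ModuleCat ℂ) (ComplexShape.up ℤ)
          (n - ε)).mapHomologicalComplex (ComplexShape.up ℤ)).obj K).homology ε)) := by
  have hzrow : ∀ (p q : ℤ), IsZero (K.X p) → IsZero ((K.flip.X q).X p) := fun p q h =>
    (HomologicalComplex.eval (ModuleCat ℂ) (ComplexShape.up ℤ) q).map_isZero h
  obtain hε | hε := hε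
  · -- ε = 1 : two columns at 0 and 1, the Felder `H⁰` is a kernel.
    subst hε
    set Mx := (((HomologicalComplex.homologyFunctor (ModuleCat ℂ) (ComplexShape.up ℤ)
        0).mapHomologicalComplex (ComplexShape.up ℤ)).obj K.flip) with hMx
    let φ : K.X 0 ⟶ K.X 1 := K.d 0 1
    let e : ∀ q : ℤ, (K.flip.X q).cycles 0 ≅ (K.flip.X q).homology 0 := fun q =>
      (K.flip.X q).isoHomologyπ (-1) 0 (by rw [CochainComplex.prev]; ring)
        ((hzrow (-1) q (hsupp (-1) (by norm_num) (by norm_num))).eq_zero_of_src _)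
    let ι' : Mx ⟶ K.X 0 :=
      { f := fun q => (e q).inv ≫ (K.flip.X q).iCycles 0
        comm' := fun q q' _ => by
          show (e q).inv ≫ (K.flip.X q).iCycles 0 ≫ (K.flip.d q q').f 0 =
            HomologicalComplex.homologyMap (K.flip.d q q') 0 ≫ (e q').inv ≫
              (K.flip.X q').iCycles 0
          rw [← cancel_epi (e q).hom]
          simp [e] }
    have w : ι' ≫ φ = 0 := by
      apply HomologicalComplex.hom_ext
      intro q
      show ((e q).inv ≫ (K.flip.X q).iCycles 0) ≫ (K.flip.X q).d 0 1 = 0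
      rw [Category.assoc, (K.flip.X q).iCycles_d 0 1, comp_zero]
    have hse : ∀ q : ℤ, (ShortComplex.mk (ι'.f q) (φ.f q)
        (by rw [← HomologicalComplex.comp_f, w]; rfl)).ShortExact := by
      intro q
      have hz2 : IsZero ((K.flip.X q).X 2) := hzrow 2 q (hsupp 2 (by norm_num) (by norm_num))
      have hepi : Epi ((K.flip.X q).d 0 1) := by
        refine Preadditive.epi_of_isZero_cokernel _ (IsZero.of_iso (hfelder q 1 one_ne_zero) ?_)
        exact (homologyIsoCokernel (K.flip.X q) 0 1 2 (by rw [CochainComplex.prev]; ring)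
          (by rw [CochainComplex.next]; ring) hz2).symm
      have hexact : (ShortComplex.mk ((K.flip.X q).iCycles 0) ((K.flip.X q).d 0 1)
          ((K.flip.X q).iCycles_d 0 1)).Exact :=
        ShortComplex.exact_of_f_is_kernel _
          ((K.flip.X q).cyclesIsKernel 0 1 (by rw [CochainComplex.next]; ring))
      have iso : (ShortComplex.mk ((K.flip.X q).iCycles 0) ((K.flip.X q).d 0 1)
          ((K.flip.X q).iCycles_d 0 1)) ≅ (ShortComplex.mk (ι'.f q) (φ.f q)
          (by rw [← HomologicalComplex.comp_f, w]; rfl)) :=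
        ShortComplex.isoMk (e q) (Iso.refl _) (Iso.refl _) (by simp [ι']; exact (Iso.hom_inv_id_assoc _ _).trans (Category.comp_id _).symm) (by
          show (K.flip.X q).d 0 1 ≫ 𝟙 _ = 𝟙 _ ≫ (K.flip.X q).d 0 1
          simp; exact (Category.comp_id _).trans (Category.id_comp _).symm)
      exact { exact := ShortComplex.exact_of_iso iso hexact
              mono_f := by show Mono ((e q).inv ≫ (K.flip.X q).iCycles 0); infer_instance
              epi_g := by show Epi ((K.flip.X q).d 0 1); exact hepi }
    obtain ⟨E⟩ := subcomplex_homology_iso (M := Mx) (B := K.X 0) (Cc := K.X 1) ι' φ w hse n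
    have isoR1 : ((((HomologicalComplex.homologyFunctor (ModuleCat ℂ) (ComplexShape.up ℤ)
        n).mapHomologicalComplex (ComplexShape.up ℤ)).obj K).homology 0) ≅
        kernel (HomologicalComplex.homologyMap φ n) :=
      homologyIsoKernel _ (-1) 0 1 (by rw [CochainComplex.prev]; ring)
        (by rw [CochainComplex.next]; ring)
        ((HomologicalComplex.homologyFunctor (ModuleCat ℂ) (ComplexShape.up ℤ) n).map_isZero
          (hsupp (-1) (by norm_num) (by norm_num)))
    have isoR2 : ((((HomologicalComplex.homologyFunctor (ModuleCat ℂ) (ComplexShape.up ℤ)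
        (n - 1)).mapHomologicalComplex (ComplexShape.up ℤ)).obj K).homology 1) ≅
        cokernel (HomologicalComplex.homologyMap φ (n - 1)) :=
      homologyIsoCokernel _ 0 1 2 (by rw [CochainComplex.prev]; ring)
        (by rw [CochainComplex.next]; ring)
        ((HomologicalComplex.homologyFunctor (ModuleCat ℂ) (ComplexShape.up ℤ) (n - 1)).map_isZero
          (hsupp 2 (by norm_num) (by norm_num)))
    exact ⟨E ≪≫ biprod.braiding _ _ ≪≫ biprod.mapIso isoR1.symm isoR2.symm⟩
  · -- ε = -1 : two columns at -1 and 0, the Felder `H⁰` is a cokernel.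
    subst hε
    set Mx := (((HomologicalComplex.homologyFunctor (ModuleCat ℂ) (ComplexShape.up ℤ)
        0).mapHomologicalComplex (ComplexShape.up ℤ)).obj K.flip) with hMx
    let φ : K.X (-1) ⟶ K.X 0 := K.d (-1) 0
    let e : ∀ q : ℤ, (K.flip.X q).homology 0 ≅ (K.flip.X q).opcycles 0 := fun q =>
      (K.flip.X q).isoHomologyι 0 1 (by rw [CochainComplex.next]; ring)
        ((hzrow 1 q (hsupp 1 (by norm_num) (by norm_num))).eq_zero_of_tgt _)
    let π : K.X 0 ⟶ Mx :=
      { f := fun q => (K.flip.X q).pOpcycles 0 ≫ (e q).inv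
        comm' := fun q q' _ => by
          show ((K.flip.X q).pOpcycles 0 ≫ (e q).inv) ≫
              HomologicalComplex.homologyMap (K.flip.d q q') 0 =
            (K.flip.d q q').f 0 ≫ (K.flip.X q').pOpcycles 0 ≫ (e q').inv
          rw [← cancel_mono (e q').hom]
          simp [e]; erw [Category.assoc, Category.assoc, HomologicalComplex.isoHomologyι_inv_hom_id, Category.comp_id] }
    have w : φ ≫ π = 0 := by
      apply HomologicalComplex.hom_ext
      intro q
      show (K.flip.X q).d (-1) 0 ≫ (K.flip.X q).pOpcycles 0 ≫ (e q).inv = 0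
      rw [← Category.assoc, (K.flip.X q).d_pOpcycles (-1) 0, zero_comp]
    have hse : ∀ q : ℤ, (ShortComplex.mk (φ.f q) (π.f q)
        (by rw [← HomologicalComplex.comp_f, w]; rfl)).ShortExact := by
      intro q
      have hmono : Mono ((K.flip.X q).d (-1) 0) := by
        refine Preadditive.mono_of_isZero_kernel _
          (IsZero.of_iso (hfelder q (-1) (by norm_num)) ?_)
        exact (homologyIsoKernel (K.flip.X q) (-2) (-1) 0 (by rw [CochainComplex.prev]; ring)
          (by rw [CochainComplex.next]; ring)
          (hzrow (-2) q (hsupp (-2) (by norm_num) (by norm_num)))).symm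
      have hexact : (ShortComplex.mk ((K.flip.X q).d (-1) 0) ((K.flip.X q).pOpcycles 0)
          ((K.flip.X q).d_pOpcycles (-1) 0)).Exact :=
        ShortComplex.exact_of_g_is_cokernel _
          ((K.flip.X q).opcyclesIsCokernel (-1) 0 (by rw [CochainComplex.prev]; ring))
      have iso : (ShortComplex.mk ((K.flip.X q).d (-1) 0) ((K.flip.X q).pOpcycles 0)
          ((K.flip.X q).d_pOpcycles (-1) 0)) ≅ (ShortComplex.mk (φ.f q) (π.f q)
          (by rw [← HomologicalComplex.comp_f, w]; rfl)) :=
        ShortComplex.isoMk (Iso.refl _) (Iso.refl _) (e q).symm (by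
          show 𝟙 _ ≫ (K.flip.X q).d (-1) 0 = (K.flip.X q).d (-1) 0 ≫ 𝟙 _
          simp; exact (Category.id_comp _).trans (Category.comp_id _).symm) (by simp; exact Category.id_comp _)
      exact { exact := ShortComplex.exact_of_iso iso hexact
              mono_f := by show Mono ((K.flip.X q).d (-1) 0); exact hmono
              epi_g := by show Epi ((K.flip.X q).pOpcycles 0 ≫ (e q).inv); infer_instance }
    obtain ⟨E⟩ := quotient_homology_iso (B := K.X (-1)) (Cc := K.X 0) (M := Mx) φ π w hse n
    rw [show n - -1 = n + 1 by ring]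
    have isoR1 : ((((HomologicalComplex.homologyFunctor (ModuleCat ℂ) (ComplexShape.up ℤ)
        n).mapHomologicalComplex (ComplexShape.up ℤ)).obj K).homology 0) ≅
        cokernel (HomologicalComplex.homologyMap φ n) :=
      homologyIsoCokernel _ (-1) 0 1 (by rw [CochainComplex.prev]; ring)
        (by rw [CochainComplex.next]; ring)
        ((HomologicalComplex.homologyFunctor (ModuleCat ℂ) (ComplexShape.up ℤ) n).map_isZero
          (hsupp 1 (by norm_num) (by norm_num)))
    have isoR2 : ((((HomologicalComplex.homologyFunctor (ModuleCat ℂ) (ComplexShape.up ℤ)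
        (n + 1)).mapHomologicalComplex (ComplexShape.up ℤ)).obj K).homology (-1)) ≅
        kernel (HomologicalComplex.homologyMap φ (n + 1)) :=
      homologyIsoKernel _ (-2) (-1) 0 (by rw [CochainComplex.prev]; ring)
        (by rw [CochainComplex.next]; ring)
        ((HomologicalComplex.homologyFunctor (ModuleCat ℂ) (ComplexShape.up ℤ) (n + 1)).map_isZero
          (hsupp (-2) (by norm_num) (by norm_num)))
    exact ⟨E ≪≫ biprod.mapIso isoR1.symm isoR2.symm⟩
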